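/- For all complex numbers w, u with |w| ≥ 1 and u² = w² − 1, one has |w + u| · |w − u| = 1 (hence log min(|w+u|, |w−u|) = − log max(|w+u|, |w−u|)), and |log(max(|w + u|, |w − u|)) − log(2|w|)| ≤ 1/|w|². (This is the key estimate behind the asymptotics (2.26) of the inner-expansion function Y^{(j)}(ς) = Re ln(y + √(y² − 1)): at infinity Y^{(j)} = ln|ς| + ln 2 − ln(α^j + β^j) + O(|ς|^{−2}) up to the dipole term.) -/

import Mathlib

/-- For `|w| ≥ 1` and `u² = w² − 1` one has `|w + u| |w − u| = 1` (hence
`log min(|w+u|, |w−u|) = − log max(|w+u|, |w−u|)`), and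
`|log max(|w+u|, |w−u|) − log(2|w|)| ≤ 1/|w|²`. -/
theorem sqrt_branch_log_estimate (w u : ℂ) (hw : 1 ≤ ‖w‖)
    (hu : u ^ 2 = w ^ 2 - 1) :
    ‖w + u‖ * ‖w - u‖ = 1 ∧
    Real.log (min (‖w + u‖) (‖w - u‖))
      = - Real.log (max (‖w + u‖) (‖w - u‖)) ∧
    |Real.log (max (‖w + u‖) (‖w - u‖)) -
        Real.log (2 * ‖w‖)|
      ≤ 1 / (‖w‖) ^ 2 := by
  set a := ‖w + u‖ with ha
  set b := ‖w - u‖ with hb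
  have hprod : a * b = 1 := by
    rw [ha, hb, ← norm_mul]
    have h1 : (w + u) * (w - u) = 1 := by
      have : (w + u) * (w - u) = w ^ 2 - u ^ 2 := by ring
      rw [this, hu]; ring
    rw [h1, norm_one]
  set m := min a b with hm
  set M := max a b with hM
  have hmM : m * M = 1 := (min_mul_max a b).trans hprod
  have ha0 : 0 < a := lt_of_le_of_ne (norm_nonneg _) (by
    intro h; rw [← h] at hprod; simp at hprod)
  have hb0 : 0 < b := lt_of_le_of_ne (norm_nonneg _) (by
    intro h; rw [← h] at hprod; simp at hprod)
  have hm0 : 0 < m := lt_min ha0 hb0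
  have hM0 : 0 < M := lt_of_lt_of_le hm0 (min_le_max)
  have hmle : m ≤ M := min_le_max
  have hM1 : 1 ≤ M := by nlinarith
  have hm1 : m ≤ 1 := by nlinarith
  set W := ‖w‖ with hW
  have hW0 : 0 < W := lt_of_lt_of_le one_pos hw
  have hsum : 2 * W ≤ m + M := by
    have h2w : ‖2 * w‖ ≤ a + b := by
      have : (2 : ℂ) * w = (w + u) + (w - u) := by ring
      rw [this]; exact norm_add_le _ _
    rw [norm_mul] at h2w
    simp only [Complex.norm_ofNat] at h2w
    rw [min_add_max]
    exact h2w
  have hA : a ≤ 2 * W + b := by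
    have : w + u = 2 * w - (w - u) := by ring
    calc a = ‖2 * w - (w - u)‖ := by rw [ha, ← this]
      _ ≤ ‖2 * w‖ + ‖w - u‖ := norm_sub_le _ _
      _ = 2 * W + b := by rw [norm_mul]; simp [hW, hb]
  have hB : b ≤ 2 * W + a := by
    have : w - u = 2 * w - (w + u) := by ring
    calc b = ‖2 * w - (w + u)‖ := by rw [hb, ← this]
      _ ≤ ‖2 * w‖ + ‖w + u‖ := norm_sub_le _ _
      _ = 2 * W + a := by rw [norm_mul]; simp [hW, ha]
  have hub : M ≤ 2 * W + m := by
    rcases le_total a b with h | h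
    · rw [hM, max_eq_right h, hm, min_eq_left h]; exact hB
    · rw [hM, max_eq_left h, hm, min_eq_right h]; exact hA
  have hMw : W ≤ M := by linarith
  have hminv : m = M⁻¹ := by field_simp; linarith [hmM]
  refine ⟨hprod, ?_, ?_⟩
  · rw [hminv, Real.log_inv]
  · rw [abs_le]
    constructor
    · -- log(2W) - log M ≤ 1/W²  (lower bound form)
      have hlog : Real.log (2 * W / M) ≤ 2 * W / M - 1 :=
        Real.log_le_sub_one_of_pos (by positivity)
      rw [Real.log_div (by positivity) (ne_of_gt hM0)] at hlog
      have h1 : 2 * W / M - 1 ≤ 1 / W ^ 2 := by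
        rw [div_sub_one (ne_of_gt hM0), div_le_div_iff₀ hM0 (by positivity)]
        have e1 : 2 * W - M ≤ m := by linarith
        have e2 : W ^ 2 ≤ M ^ 2 := by nlinarith
        have e3 : m * M ^ 2 = M := by linear_combination M * hmM
        nlinarith [mul_le_mul_of_nonneg_right e1 (sq_nonneg W),
          mul_le_mul_of_nonneg_left e2 hm0.le]
      linarith
    · -- log M - log(2W) ≤ 1/W²
      have hlog : Real.log (M / (2 * W)) ≤ M / (2 * W) - 1 :=
        Real.log_le_sub_one_of_pos (by positivity)
      rw [Real.log_div (ne_of_gt hM0) (by positivity)] at hlog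
      have h1 : M / (2 * W) - 1 ≤ 1 / W ^ 2 := by
        rw [div_sub_one (by positivity), div_le_div_iff₀ (by positivity) (by positivity)]
        have e1 : M - 2 * W ≤ m := by linarith
        have e2 : m * W ≤ 1 := by nlinarith [mul_le_mul_of_nonneg_left hMw hm0.le]
        nlinarith [mul_le_mul_of_nonneg_right e1 (sq_nonneg W),
          mul_le_mul_of_nonneg_right e2 hW0.le]
      linarith
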